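/- In the mixed-measure setting, let f_d : D• → ℝ be a function with f_d > 0, and define the discrete embedding ι_d(f_d) : I → ℝ by ι_d(f_d)(t) = f_d(t_{D+1}) for t ∈ C and ι_d(f_d)(t_d) = f_d(t_d) for each t_d ∈ D. Set S_{δ•}(f_d) = (1/Σ_{d=1}^{D+1} w_d) Σ_{d=1}^{D+1} w_d log f_d(t_d), where w_{D+1} = λ(I). Then (1/μ(I)) ∫_I log ι_d(f_d) dμ = S_{δ•}(f_d), and consequently clr_μ[ι_d(f_d)](t) = log f_d(t_{D+1}) − S_{δ•}(f_d) for t ∈ C and clr_μ[ι_d(f_d)](t_d) = log f_d(t_d) − S_{δ•}(f_d) for each t_d ∈ D; that is, the clr transform commutes with the discrete embedding. -/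

import Mathlib

open MeasureTheory
open scoped Classical

/-- The mixed reference measure `μ = Σ_d w_d δ_{t_d} + λ`, where `λ` is Lebesgue measure
restricted to `I`. -/
noncomputable def mixedMeasure (I : Set ℝ) (n : ℕ) (t : Fin n → ℝ) (w : Fin n → ℝ) :
    Measure ℝ :=
  (∑ d, ENNReal.ofReal (w d) • Measure.dirac (t d)) + volume.restrict I

/-- In the mixed-measure setting, the clr transform commutes with the discrete embedding
`ι_d(f_d)` (equal to `f_d(t_{D+1})` on `C = I ∖ D` and to `f_d(t_d)` at each atom):
`(1/μ(I)) ∫_I log ι_d(f_d) dμ = S_{δ•}(f_d)`, hence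
`clr_μ[ι_d(f_d)] = log f_d(t_{D+1}) − S_{δ•}(f_d)` on `C` and
`clr_μ[ι_d(f_d)](t_d) = log f_d(t_d) − S_{δ•}(f_d)` on `D`. -/
theorem clr_commutes_with_discrete_embedding
    (I : Set ℝ) (hImeas : MeasurableSet I) (hIconn : I.OrdConnected)
    (hI0 : 0 < volume I) (hIfin : volume I < ⊤)
    (n : ℕ) (t : Fin n → ℝ) (htinj : Function.Injective t) (htI : ∀ d, t d ∈ I)
    (w : Fin n → ℝ) (hw : ∀ d, 0 < w d)
    (s : ℝ) (hs : s ∉ Set.range t)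
    (fd : ℝ → ℝ) (hfdpos : ∀ d, 0 < fd (t d)) (hfdspos : 0 < fd s)
    (Sd : ℝ)
    (hSd : Sd = (∑ d, w d + (volume I).toReal)⁻¹ *
      (∑ d, w d * Real.log (fd (t d)) + (volume I).toReal * Real.log (fd s)))
    (g : ℝ → ℝ) (hg : g = fun x => if x ∈ Set.range t then fd x else fd s) :
    ((mixedMeasure I n t w) I).toReal⁻¹ *
        (∫ x in I, Real.log (g x) ∂(mixedMeasure I n t w)) = Sd ∧
      (∀ x ∈ I \ Set.range t,
        Real.log (g x) - ((mixedMeasure I n t w) I).toReal⁻¹ *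
            (∫ y in I, Real.log (g y) ∂(mixedMeasure I n t w)) =
          Real.log (fd s) - Sd) ∧
      (∀ d : Fin n,
        Real.log (g (t d)) - ((mixedMeasure I n t w) I).toReal⁻¹ *
            (∫ y in I, Real.log (g y) ∂(mixedMeasure I n t w)) =
          Real.log (fd (t d)) - Sd) := by

  have hg_t : ∀ d : Fin n, g (t d) = fd (t d) := by
    intro d; rw [hg]; exact if_pos ⟨d, rfl⟩
  have hg_s : ∀ x ∉ Set.range t, g x = fd s := by
    intro x hx; rw [hg]; exact if_neg hx
  set μ := mixedMeasure I n t w with hμ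
  -- value of μ on I
  have hμI : (μ I).toReal = ∑ d, w d + (volume I).toReal := by
    have h1 : μ I = (∑ d, ENNReal.ofReal (w d)) + volume I := by
      rw [hμ, mixedMeasure, Measure.add_apply, Measure.restrict_apply_self]
      congr 1
      rw [Measure.coe_finset_sum, Finset.sum_apply]
      refine Finset.sum_congr rfl fun d _ => ?_
      rw [Measure.smul_apply, Measure.dirac_apply' _ hImeas,
        Set.indicator_of_mem (htI d)]
      simp
    rw [h1, ENNReal.toReal_add (by simp) hIfin.ne]
    congr 1
    rw [ENNReal.toReal_sum fun d _ => ENNReal.ofReal_ne_top]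
    exact Finset.sum_congr rfl fun d _ => ENNReal.toReal_ofReal (hw d).le
  -- restricting μ to I
  have hres : μ.restrict I
      = (∑ d, ENNReal.ofReal (w d) • Measure.dirac (t d)) + volume.restrict I := by
    rw [hμ, mixedMeasure, Measure.restrict_add,
      Measure.restrict_restrict hImeas, Set.inter_self]
    congr 1
    rw [← Measure.restrictₗ_apply, map_sum]
    refine Finset.sum_congr rfl fun d _ => ?_
    rw [Measure.restrictₗ_apply, Measure.restrict_smul, MeasureTheory.restrict_dirac' hImeas,
      if_pos (htI d)]
  -- integrability wrt dirac measures
  have haed : ∀ a : ℝ, (fun x => Real.log (g x)) =ᵐ[Measure.dirac a]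
      fun _ => Real.log (g a) := by
    intro a
    rw [Filter.EventuallyEq, MeasureTheory.ae_dirac_eq]
    exact Filter.eventually_pure.2 rfl
  have hintd : ∀ d : Fin n, Integrable (fun x => Real.log (g x))
      (ENNReal.ofReal (w d) • Measure.dirac (t d)) := fun d =>
    ((integrable_const _).congr (haed (t d)).symm).smul_measure ENNReal.ofReal_ne_top
  -- a.e. equality on volume.restrict I
  have haev : (fun x => Real.log (g x)) =ᵐ[volume.restrict I]
      fun _ => Real.log (fd s) := by
    have hnull : volume (Set.range t) = 0 :=
      (Set.finite_range t).countable.measure_zero _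
    have h0 : ∀ᵐ x ∂(volume.restrict I), x ∉ Set.range t := by
      refine ae_restrict_of_ae ?_
      rw [ae_iff]
      simpa only [not_not, Set.setOf_mem_eq] using hnull
    filter_upwards [h0] with x hx
    rw [hg_s x hx]
  have hintv : Integrable (fun x => Real.log (g x)) (volume.restrict I) :=
    (integrableOn_const hIfin.ne).congr haev.symm
  -- compute the integral
  have hint : ∫ x in I, Real.log (g x) ∂μ
      = ∑ d, w d * Real.log (fd (t d)) + (volume I).toReal * Real.log (fd s) := by
    rw [show (∫ x in I, Real.log (g x) ∂μ) = ∫ x, Real.log (g x) ∂(μ.restrict I) from rfl,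
      hres, integral_add_measure (integrable_finset_sum_measure.2 fun d _ => hintd d) hintv,
      integral_finset_sum_measure fun d _ => hintd d]
    congr 1
    · refine Finset.sum_congr rfl fun d _ => ?_
      rw [integral_smul_measure, integral_dirac, hg_t d,
        ENNReal.toReal_ofReal (hw d).le, smul_eq_mul]
    · rw [integral_congr_ae haev, integral_const, Measure.real, Measure.restrict_apply_univ,
        smul_eq_mul]
  have key : (μ I).toReal⁻¹ * (∫ x in I, Real.log (g x) ∂μ) = Sd := by
    rw [hint, hμI, hSd]
  refine ⟨key, ?_, ?_⟩
  · intro x hx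
    rw [hg_s x hx.2, key]
  · intro d
    rw [hg_t d, key]
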